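/- Let T>0, α≥0, H₁,H₂∈(0,1) and let d≥1 be an integer. Set J(ε) = ∫₀^T ∫₀^T (u^{2H₁} + v^{2H₂} + ε)^{−d/2−α} du dv. Then there exist constants 0 < c ≤ C (independent of ε) such that for all ε∈(0,T/2): (i) if (H₁+H₂)/(H₁H₂) < d+2α, then c·ε^{(H₁+H₂)/(2H₁H₂) − d/2 − α} ≤ J(ε) ≤ C·ε^{(H₁+H₂)/(2H₁H₂) − d/2 − α}; (ii) if (H₁+H₂)/(H₁H₂) = d+2α, then c·ln(1+ε^{−1/2}) ≤ J(ε) ≤ C·ln(1+ε^{−1/2}); (iii) if (H₁+H₂)/(H₁H₂) > d+2α, then c ≤ J(ε) ≤ C. -/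

import Mathlib

open MeasureTheory

noncomputable section

open intervalIntegral Set


lemma pint {p A q : ℝ} (hp : 0 < p) (hA : 0 < A) {a b : ℝ} (ha : 0 ≤ a) (hb : 0 ≤ b) :
    IntervalIntegrable (fun v : ℝ => (v ^ p + A) ^ q) volume a b := by
  apply ContinuousOn.intervalIntegrable
  intro x hx
  have hx0 : 0 ≤ x := le_trans (le_min ha hb) hx.1
  have hbase : 0 < x ^ p + A := by positivity
  exact (((Real.continuousAt_rpow_const x p (Or.inr hp.le)).add continuousAt_const).rpow_const
    (Or.inl hbase.ne')).continuousWithinAt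

lemma pcont {p A q : ℝ} (hp : 0 < p) (hA : 0 < A) :
    Continuous (fun v : ℝ => (|v| ^ p + A) ^ q) := by
  rw [continuous_iff_continuousAt]
  intro x
  have hbase : 0 < |x| ^ p + A := by positivity
  exact (((Real.continuousAt_rpow_const _ p (Or.inr hp.le)).comp
    continuous_abs.continuousAt).add continuousAt_const).rpow_const (Or.inl hbase.ne')

lemma lemA {H T A γ : ℝ} (hH : 0 < H) (hT : 0 < T) (hA : 0 < A) (hγ : 1 < 2*H*γ) :
    ∫ v in (0:ℝ)..T, (v ^ (2*H) + A) ^ (-γ) ≤ (1 + 1/(2*H*γ - 1)) * A ^ (1/(2*H) - γ) := by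
  set p := 2*H with hp
  have hp0 : 0 < p := by positivity
  have hγ0 : 0 < γ := by nlinarith
  set v₀ := A ^ (1/p) with hv₀
  have hv₀0 : 0 < v₀ := Real.rpow_pos_of_pos hA _
  have hv₀p : v₀ ^ p = A := by
    rw [hv₀, ← Real.rpow_mul hA.le, one_div_mul_cancel hp0.ne', Real.rpow_one]
  have hAexp : v₀ * A ^ (-γ) = A ^ (1/p - γ) := by
    rw [hv₀, show 1/p - γ = 1/p + (-γ) by ring, Real.rpow_add hA]
  have hApos : (0:ℝ) < A ^ (1/p - γ) := Real.rpow_pos_of_pos hA _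
  have hcoef : (1:ℝ) ≤ 1 + 1/(p*γ - 1) := by
    have : 0 < p*γ - 1 := by linarith
    have : 0 < 1/(p*γ-1) := by positivity
    linarith
  have hconst : ∀ b, 0 < b → b ≤ T →
      ∫ v in (0:ℝ)..b, (v ^ p + A) ^ (-γ) ≤ b * A ^ (-γ) := by
    intro b hb hbT
    have := intervalIntegral.integral_mono_on (μ := volume) hb.le
      (pint hp0 hA le_rfl hb.le) (_root_.intervalIntegrable_const (c := A ^ (-γ)))
      (fun x hx => by
        have hx0 : 0 ≤ x := hx.1
        have : A ≤ x ^ p + A := by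
          have : 0 ≤ x ^ p := Real.rpow_nonneg hx0 _
          linarith
        exact Real.rpow_le_rpow_of_nonpos hA this (by linarith))
    simpa [smul_eq_mul] using this
  rcases le_or_gt T v₀ with hcase | hcase
  · calc ∫ v in (0:ℝ)..T, (v ^ p + A) ^ (-γ) ≤ T * A ^ (-γ) := hconst T hT le_rfl
    _ ≤ v₀ * A ^ (-γ) := by
        have : (0:ℝ) < A ^ (-γ) := Real.rpow_pos_of_pos hA _
        nlinarith
    _ = A ^ (1/p - γ) := hAexp
    _ ≤ (1 + 1/(p*γ - 1)) * A ^ (1/p - γ) := by nlinarith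
  · have hsplit : ∫ v in (0:ℝ)..T, (v ^ p + A) ^ (-γ) =
        (∫ v in (0:ℝ)..v₀, (v ^ p + A) ^ (-γ)) + ∫ v in v₀..T, (v ^ p + A) ^ (-γ) :=
      (intervalIntegral.integral_add_adjacent_intervals
        (pint hp0 hA le_rfl hv₀0.le) (pint hp0 hA hv₀0.le (hT.le))).symm
    have h1 : ∫ v in (0:ℝ)..v₀, (v ^ p + A) ^ (-γ) ≤ A ^ (1/p - γ) := by
      calc _ ≤ v₀ * A ^ (-γ) := hconst v₀ hv₀0 hcase.le
      _ = A ^ (1/p - γ) := hAexp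
    have hne : (0:ℝ) ∉ Set.uIcc v₀ T := by
      rw [Set.uIcc_of_le hcase.le]
      intro h; exact absurd h.1 (not_le.2 hv₀0)
    have h2 : ∫ v in v₀..T, (v ^ p + A) ^ (-γ) ≤ ∫ v in v₀..T, v ^ (-(p*γ)) := by
      apply intervalIntegral.integral_mono_on hcase.le
        (pint hp0 hA hv₀0.le hT.le)
        (intervalIntegrable_rpow (Or.inr hne))
      intro x hx
      have hx0 : 0 < x := lt_of_lt_of_le hv₀0 hx.1
      have hb : x ^ p ≤ x ^ p + A := by linarith
      have := Real.rpow_le_rpow_of_nonpos (Real.rpow_pos_of_pos hx0 p) hb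
        (by linarith : -γ ≤ 0)
      calc (x ^ p + A) ^ (-γ) ≤ (x ^ p) ^ (-γ) := this
      _ = x ^ (-(p*γ)) := by rw [← Real.rpow_mul hx0.le]; ring_nf
    have h34 : ∫ v in v₀..T, v ^ (-(p*γ)) ≤ A ^ (1/p - γ) / (p*γ - 1) := by
      rw [integral_rpow (Or.inr ⟨by intro h; linarith, hne⟩)]
      have hc : (0:ℝ) < p*γ - 1 := by linarith
      have hne2 : -(p*γ)+1 ≠ 0 := by intro h; linarith
      have hTpos : (0:ℝ) < T ^ (-(p*γ)+1) := Real.rpow_pos_of_pos hT _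
      have hv₀exp : v₀ ^ (-(p*γ)+1) = A ^ (1/p - γ) := by
        rw [hv₀, ← Real.rpow_mul hA.le]
        congr 1
        field_simp
        ring
      have heq : (T ^ (-(p*γ)+1) - v₀ ^ (-(p*γ)+1)) / (-(p*γ)+1) =
          (v₀ ^ (-(p*γ)+1) - T ^ (-(p*γ)+1)) / (p*γ - 1) := by
        rw [div_eq_div_iff hne2 hc.ne']
        ring
      rw [heq, hv₀exp]
      gcongr
      linarith
    rw [hsplit]
    have := h2.trans h34
    have hfin : A ^ (1/p - γ) + A ^ (1/p - γ) / (p*γ - 1) =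
        (1 + 1/(p*γ - 1)) * A ^ (1/p - γ) := by ring
    linarith

lemma lemLog {H T A : ℝ} (hH : 0 < H) (hT : 0 < T) (hA : 0 < A) :
    ∫ v in (0:ℝ)..T, (v ^ (2*H) + A) ^ (-(1/(2*H))) ≤
      1 + max 0 (Real.log T - (1/(2*H)) * Real.log A) := by
  set p := 2*H with hp
  have hp0 : 0 < p := by positivity
  set h := 1/p with hh
  have hh0 : 0 < h := by positivity
  set v₀ := A ^ h with hv₀
  have hv₀0 : 0 < v₀ := Real.rpow_pos_of_pos hA _
  have hv₀p : v₀ ^ p = A := by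
    rw [hv₀, ← Real.rpow_mul hA.le, hh, one_div_mul_cancel hp0.ne', Real.rpow_one]
  have hone : v₀ * A ^ (-h) = 1 := by
    rw [hv₀, ← Real.rpow_add hA]
    simp
  have hmax : (0:ℝ) ≤ max 0 (Real.log T - h * Real.log A) := le_max_left _ _
  have hconst : ∀ b, 0 < b → ∫ v in (0:ℝ)..b, (v ^ p + A) ^ (-h) ≤ b * A ^ (-h) := by
    intro b hb
    have := intervalIntegral.integral_mono_on (μ := volume) hb.le
      (pint hp0 hA le_rfl hb.le) (_root_.intervalIntegrable_const (c := A ^ (-h)))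
      (fun x hx => by
        have : A ≤ x ^ p + A := by
          have : 0 ≤ x ^ p := Real.rpow_nonneg hx.1 _
          linarith
        exact Real.rpow_le_rpow_of_nonpos hA this (by linarith))
    simpa [smul_eq_mul] using this
  rcases le_or_gt T v₀ with hcase | hcase
  · have := hconst T hT
    have h2 : T * A ^ (-h) ≤ v₀ * A ^ (-h) := by
      have : (0:ℝ) < A ^ (-h) := Real.rpow_pos_of_pos hA _
      nlinarith
    rw [hone] at h2
    linarith
  · have hsplit : ∫ v in (0:ℝ)..T, (v ^ p + A) ^ (-h) =
        (∫ v in (0:ℝ)..v₀, (v ^ p + A) ^ (-h)) + ∫ v in v₀..T, (v ^ p + A) ^ (-h) :=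
      (intervalIntegral.integral_add_adjacent_intervals
        (pint hp0 hA le_rfl hv₀0.le) (pint hp0 hA hv₀0.le hT.le)).symm
    have h1 : ∫ v in (0:ℝ)..v₀, (v ^ p + A) ^ (-h) ≤ 1 := by
      have := hconst v₀ hv₀0
      rwa [hone] at this
    have hne : (0:ℝ) ∉ Set.uIcc v₀ T := by
      rw [Set.uIcc_of_le hcase.le]
      intro hmem; exact absurd hmem.1 (not_le.2 hv₀0)
    have h2 : ∫ v in v₀..T, (v ^ p + A) ^ (-h) ≤ ∫ v in v₀..T, v⁻¹ := by
      apply intervalIntegral.integral_mono_on hcase.le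
        (pint hp0 hA hv₀0.le hT.le)
        (intervalIntegrable_inv (fun x hx => by
          rw [Set.uIcc_of_le hcase.le] at hx
          exact (lt_of_lt_of_le hv₀0 hx.1).ne') continuousOn_id)
      intro x hx
      have hx0 : 0 < x := lt_of_lt_of_le hv₀0 hx.1
      have hb : x ^ p ≤ x ^ p + A := by linarith
      calc (x ^ p + A) ^ (-h) ≤ (x ^ p) ^ (-h) :=
            Real.rpow_le_rpow_of_nonpos (Real.rpow_pos_of_pos hx0 p) hb (by linarith)
      _ = x⁻¹ := by
          rw [← Real.rpow_mul hx0.le, hh]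
          rw [show p * -(1/p) = -1 by field_simp]
          exact Real.rpow_neg_one x
    have h3 : ∫ v in v₀..T, v⁻¹ = Real.log T - h * Real.log A := by
      rw [integral_inv hne, Real.log_div hT.ne' hv₀0.ne', hv₀, Real.log_rpow hA]
    have h4 : Real.log T - h * Real.log A ≤ max 0 (Real.log T - h * Real.log A) :=
      le_max_right _ _
    rw [hsplit]
    linarith [h2.trans_eq h3]

lemma lemLow {H T A γ : ℝ} (hH : 0 < H) (hT : 0 < T) (hA : 0 < A) (hγ : 0 ≤ γ) :
    min T (A ^ (1/(2*H))) * (2*A) ^ (-γ) ≤ ∫ v in (0:ℝ)..T, (v ^ (2*H) + A) ^ (-γ) := by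
  set p := 2*H with hp
  have hp0 : 0 < p := by positivity
  set v₀ := A ^ (1/p) with hv₀
  have hv₀0 : 0 < v₀ := Real.rpow_pos_of_pos hA _
  have hv₀p : v₀ ^ p = A := by
    rw [hv₀, ← Real.rpow_mul hA.le, one_div_mul_cancel hp0.ne', Real.rpow_one]
  set δ := min T v₀ with hδ
  have hδ0 : 0 < δ := lt_min hT hv₀0
  have hδT : δ ≤ T := min_le_left _ _
  have hsplit : ∫ v in (0:ℝ)..T, (v ^ p + A) ^ (-γ) =
      (∫ v in (0:ℝ)..δ, (v ^ p + A) ^ (-γ)) + ∫ v in δ..T, (v ^ p + A) ^ (-γ) :=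
    (intervalIntegral.integral_add_adjacent_intervals
      (pint hp0 hA le_rfl hδ0.le) (pint hp0 hA hδ0.le hT.le)).symm
  have h2 : 0 ≤ ∫ v in δ..T, (v ^ p + A) ^ (-γ) := by
    apply intervalIntegral.integral_nonneg hδT
    intro x hx
    have hx0 : 0 ≤ x := le_trans hδ0.le hx.1
    have : (0:ℝ) ≤ x ^ p + A := by
      have := Real.rpow_nonneg hx0 p
      linarith
    exact Real.rpow_nonneg this _
  have h1 : δ * (2*A) ^ (-γ) ≤ ∫ v in (0:ℝ)..δ, (v ^ p + A) ^ (-γ) := by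
    have := intervalIntegral.integral_mono_on (μ := volume) hδ0.le
      (_root_.intervalIntegrable_const (c := (2*A) ^ (-γ))) (pint hp0 hA le_rfl hδ0.le)
      (fun x hx => by
        have hx0 : 0 ≤ x := hx.1
        have hxv : x ≤ v₀ := le_trans hx.2 (min_le_right _ _)
        have hxp : x ^ p ≤ A := by
          calc x ^ p ≤ v₀ ^ p := Real.rpow_le_rpow hx0 hxv hp0.le
          _ = A := hv₀p
        have hbpos : (0:ℝ) < x ^ p + A := by
          have := Real.rpow_nonneg hx0 p
          linarith
        exact Real.rpow_le_rpow_of_nonpos hbpos (by linarith) (by linarith))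
    simpa [smul_eq_mul, mul_comm] using this
  rw [hsplit]
  linarith

lemma lemLogLow {H T A : ℝ} (hH : 0 < H) (hT : 0 < T) (hA : 0 < A)
    (hAT : A ^ (1/(2*H)) ≤ T) :
    2 ^ (-(1/(2*H))) * (Real.log T - (1/(2*H)) * Real.log A) ≤
      ∫ v in (0:ℝ)..T, (v ^ (2*H) + A) ^ (-(1/(2*H))) := by
  set p := 2*H with hp
  have hp0 : 0 < p := by positivity
  set h := 1/p with hh
  have hh0 : 0 < h := by positivity
  set v₀ := A ^ h with hv₀
  have hv₀0 : 0 < v₀ := Real.rpow_pos_of_pos hA _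
  have hv₀T : v₀ ≤ T := hAT
  have hv₀p : v₀ ^ p = A := by
    rw [hv₀, ← Real.rpow_mul hA.le, hh, one_div_mul_cancel hp0.ne', Real.rpow_one]
  have hsplit : ∫ v in (0:ℝ)..T, (v ^ p + A) ^ (-h) =
      (∫ v in (0:ℝ)..v₀, (v ^ p + A) ^ (-h)) + ∫ v in v₀..T, (v ^ p + A) ^ (-h) :=
    (intervalIntegral.integral_add_adjacent_intervals
      (pint hp0 hA le_rfl hv₀0.le) (pint hp0 hA hv₀0.le hT.le)).symm
  have h1 : 0 ≤ ∫ v in (0:ℝ)..v₀, (v ^ p + A) ^ (-h) := by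
    apply intervalIntegral.integral_nonneg hv₀0.le
    intro x hx
    have : (0:ℝ) ≤ x ^ p + A := by
      have := Real.rpow_nonneg hx.1 p
      linarith
    exact Real.rpow_nonneg this _
  have hinv : IntervalIntegrable (fun x : ℝ => x⁻¹) volume v₀ T :=
    intervalIntegrable_inv (fun x hx => by
      rw [Set.uIcc_of_le hv₀T] at hx
      exact (lt_of_lt_of_le hv₀0 hx.1).ne') continuousOn_id
  have h2 : ∫ v in v₀..T, 2 ^ (-h) * v⁻¹ ≤ ∫ v in v₀..T, (v ^ p + A) ^ (-h) := by
    apply intervalIntegral.integral_mono_on hv₀T (hinv.const_mul _)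
      (pint hp0 hA hv₀0.le hT.le)
    intro x hx
    have hx0 : 0 < x := lt_of_lt_of_le hv₀0 hx.1
    have hxA : A ≤ x ^ p := by
      calc A = v₀ ^ p := hv₀p.symm
      _ ≤ x ^ p := Real.rpow_le_rpow hv₀0.le hx.1 hp0.le
    have hxppos : (0:ℝ) < x ^ p := Real.rpow_pos_of_pos hx0 _
    have key : (x ^ p + A) ^ (-h) ≥ (2 * x ^ p) ^ (-h) :=
      Real.rpow_le_rpow_of_nonpos (by linarith) (by linarith) (by linarith)
    calc 2 ^ (-h) * x⁻¹ = (2 * x ^ p) ^ (-h) := by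
          rw [Real.mul_rpow (by norm_num) hxppos.le, ← Real.rpow_mul hx0.le]
          rw [show p * -h = -1 by rw [hh]; field_simp]
          rw [Real.rpow_neg_one]
    _ ≤ (x ^ p + A) ^ (-h) := key
  have h3 : ∫ v in v₀..T, 2 ^ (-h) * v⁻¹ = 2 ^ (-h) * (Real.log T - h * Real.log A) := by
    rw [intervalIntegral.integral_const_mul, integral_inv (by
      rw [Set.uIcc_of_le hv₀T]
      intro hmem; exact absurd hmem.1 (not_le.2 hv₀0))]
    rw [Real.log_div hT.ne' hv₀0.ne', hv₀, Real.log_rpow hA]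
  rw [hsplit]
  rw [h3] at h2
  linarith

lemma lemC {H T A γ : ℝ} (hH : 0 < H) (hT : 0 < T) (hA : 0 < A) (hγ0 : 0 < γ)
    (hγ1 : 2*H*γ < 1) :
    ∫ v in (0:ℝ)..T, (v ^ (2*H) + A) ^ (-γ) ≤ T ^ (1 - 2*H*γ) / (1 - 2*H*γ) := by
  set p := 2*H with hp
  have hp0 : 0 < p := by positivity
  have h1 : ∫ v in (0:ℝ)..T, (v ^ p + A) ^ (-γ) ≤ ∫ v in (0:ℝ)..T, v ^ (-(p*γ)) := by
    apply intervalIntegral.integral_mono_ae_restrict hT.le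
      (pint hp0 hA le_rfl hT.le) (intervalIntegrable_rpow' (by linarith))
    have hae : ∀ᵐ x ∂(volume.restrict (Set.Icc (0:ℝ) T)), x ≠ 0 :=
      ae_restrict_of_ae (by simp [ae_iff, Set.setOf_eq_eq_singleton'])
    have hmem : ∀ᵐ x ∂(volume.restrict (Set.Icc (0:ℝ) T)), x ∈ Set.Icc (0:ℝ) T :=
      ae_restrict_mem measurableSet_Icc
    filter_upwards [hae, hmem] with x hx0 hxm
    have hx : 0 < x := lt_of_le_of_ne hxm.1 (Ne.symm hx0)
    have hb : x ^ p ≤ x ^ p + A := by linarith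
    calc (x ^ p + A) ^ (-γ) ≤ (x ^ p) ^ (-γ) :=
          Real.rpow_le_rpow_of_nonpos (Real.rpow_pos_of_pos hx _) hb (by linarith)
    _ = x ^ (-(p*γ)) := by rw [← Real.rpow_mul hx.le]; ring_nf
  have h2 : ∫ v in (0:ℝ)..T, v ^ (-(p*γ)) = T ^ (1 - p*γ) / (1 - p*γ) := by
    rw [integral_rpow (Or.inl (by linarith))]
    rw [Real.zero_rpow (by intro h; linarith : -(p*γ) + 1 ≠ 0)]
    rw [show -(p*γ) + 1 = 1 - p*γ by ring]
    ring
  linarith [h1.trans_eq h2]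

lemma grew {H₁ H₂ β T ε : ℝ} (hT : 0 ≤ T) (u : ℝ) (hu : 0 ≤ u) :
    (∫ v in (0:ℝ)..T, (|u| ^ (2*H₁) + |v| ^ (2*H₂) + ε) ^ (-β)) =
      ∫ v in (0:ℝ)..T, (v ^ (2*H₂) + (u ^ (2*H₁) + ε)) ^ (-β) := by
  apply intervalIntegral.integral_congr
  intro v hv
  rw [Set.uIcc_of_le hT] at hv
  show (|u| ^ (2*H₁) + |v| ^ (2*H₂) + ε) ^ (-β) = (v ^ (2*H₂) + (u ^ (2*H₁) + ε)) ^ (-β)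
  rw [abs_of_nonneg hu, abs_of_nonneg hv.1]
  congr 1
  ring

lemma gcont {H₁ H₂ β ε : ℝ} (h1 : 0 < H₁) (h2 : 0 < H₂) (hε : 0 < ε) (T : ℝ) :
    Continuous (fun u : ℝ => ∫ v in (0:ℝ)..T, (|u| ^ (2*H₁) + |v| ^ (2*H₂) + ε) ^ (-β)) := by
  apply intervalIntegral.continuous_parametric_intervalIntegral_of_continuous'
    (f := fun u v => (|u| ^ (2*H₁) + |v| ^ (2*H₂) + ε) ^ (-β)) ?_ 0 T
  show Continuous fun p : ℝ × ℝ => (|p.1| ^ (2*H₁) + |p.2| ^ (2*H₂) + ε) ^ (-β)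
  rw [continuous_iff_continuousAt]
  rintro ⟨u, v⟩
  have hbase : (0:ℝ) < |u| ^ (2*H₁) + |v| ^ (2*H₂) + ε := by positivity
  have c1 : ContinuousAt (fun p : ℝ × ℝ => |p.1| ^ (2*H₁)) (u, v) :=
    (Real.continuousAt_rpow_const _ _ (Or.inr (by positivity))).comp
      ((continuous_abs.comp continuous_fst).continuousAt)
  have c2 : ContinuousAt (fun p : ℝ × ℝ => |p.2| ^ (2*H₂)) (u, v) :=
    (Real.continuousAt_rpow_const _ _ (Or.inr (by positivity))).comp
      ((continuous_abs.comp continuous_snd).continuousAt)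
  exact ((c1.add c2).add continuousAt_const).rpow_const (Or.inl hbase.ne')

lemma innerInt {H₁ H₂ β ε : ℝ} (h1 : 0 < H₁) (h2 : 0 < H₂) (hε : 0 < ε) (T a b : ℝ) :
    IntervalIntegrable
      (fun u : ℝ => ∫ v in (0:ℝ)..T, (|u| ^ (2*H₁) + |v| ^ (2*H₂) + ε) ^ (-β))
      volume a b :=
  (gcont h1 h2 hε T).intervalIntegrable a b

lemma innerNonneg {H₁ H₂ β ε T : ℝ} (hT : 0 ≤ T) (hε : 0 ≤ ε) (u : ℝ) :
    0 ≤ ∫ v in (0:ℝ)..T, (|u| ^ (2*H₁) + |v| ^ (2*H₂) + ε) ^ (-β) := by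
  apply intervalIntegral.integral_nonneg hT
  intro x hx
  apply Real.rpow_nonneg
  have h1 := Real.rpow_nonneg (abs_nonneg u) (2*H₁)
  have h2 := Real.rpow_nonneg (abs_nonneg x) (2*H₂)
  linarith

lemma innerLe {H₁ H₂ β ε T : ℝ} (h1 : 0 < H₁) (h2 : 0 < H₂) (hT : 0 < T) (hε : 0 < ε)
    (hβ2 : 1 < 2*H₂*β) : ∀ u ∈ Set.Icc (0:ℝ) T,
    (∫ v in (0:ℝ)..T, (|u| ^ (2*H₁) + |v| ^ (2*H₂) + ε) ^ (-β)) ≤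
      (1 + 1/(2*H₂*β - 1)) * (u ^ (2*H₁) + ε) ^ (1/(2*H₂) - β) := by
  intro u hu
  rw [grew hT.le u hu.1]
  have hA : 0 < u ^ (2*H₁) + ε := by
    have := Real.rpow_nonneg hu.1 (2*H₁)
    linarith
  exact lemA h2 hT hA hβ2

lemma outerStep {H₁ H₂ β ε T : ℝ} (h1 : 0 < H₁) (h2 : 0 < H₂) (hT : 0 < T) (hε : 0 < ε)
    (hβ2 : 1 < 2*H₂*β) :
    (∫ u in (0:ℝ)..T, ∫ v in (0:ℝ)..T, (|u| ^ (2*H₁) + |v| ^ (2*H₂) + ε) ^ (-β)) ≤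
      (1 + 1/(2*H₂*β - 1)) * ∫ u in (0:ℝ)..T, (u ^ (2*H₁) + ε) ^ (-(β - 1/(2*H₂))) := by
  have hmono := intervalIntegral.integral_mono_on (μ := volume) hT.le
    (innerInt h1 h2 hε T 0 T)
    ((pint (p := 2*H₁) (q := 1/(2*H₂) - β) (by positivity) hε le_rfl hT.le).const_mul
      (1 + 1/(2*H₂*β - 1)))
    (innerLe h1 h2 hT hε hβ2)
  rw [intervalIntegral.integral_const_mul] at hmono
  calc (∫ u in (0:ℝ)..T, ∫ v in (0:ℝ)..T, (|u| ^ (2*H₁) + |v| ^ (2*H₂) + ε) ^ (-β)) ≤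
      (1 + 1/(2*H₂*β - 1)) * ∫ u in (0:ℝ)..T, (u ^ (2*H₁) + ε) ^ (1/(2*H₂) - β) := hmono
  _ = (1 + 1/(2*H₂*β - 1)) * ∫ u in (0:ℝ)..T, (u ^ (2*H₁) + ε) ^ (-(β - 1/(2*H₂))) := by
      congr 1
      apply intervalIntegral.integral_congr
      intro x hx
      congr 1
      ring

lemma U1 {H₁ H₂ β ε T : ℝ} (h1 : 0 < H₁) (h2 : 0 < H₂) (hT : 0 < T) (hε : 0 < ε)
    (hlt : 1/(2*H₁) + 1/(2*H₂) < β) :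
    (∫ u in (0:ℝ)..T, ∫ v in (0:ℝ)..T, (|u| ^ (2*H₁) + |v| ^ (2*H₂) + ε) ^ (-β)) ≤
      (1 + 1/(2*H₂*β - 1)) * ((1 + 1/(2*H₁*(β - 1/(2*H₂)) - 1)) *
        ε ^ (1/(2*H₁) - (β - 1/(2*H₂)))) := by
  have he₁ : 0 < 1/(2*H₁) := by positivity
  have he₂ : 0 < 1/(2*H₂) := by positivity
  have hβ2 : 1 < 2*H₂*β := by
    have h : 1/(2*H₂) < β := by linarith
    rw [div_lt_iff₀ (by positivity)] at h
    linarith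
  have hβ1 : 1 < 2*H₁*(β - 1/(2*H₂)) := by
    have h : 1/(2*H₁) < β - 1/(2*H₂) := by linarith
    rw [div_lt_iff₀ (by positivity)] at h
    linarith
  have hc₂ : (0:ℝ) ≤ 1 + 1/(2*H₂*β - 1) := by
    have : (0:ℝ) < 2*H₂*β - 1 := by linarith
    positivity
  calc (∫ u in (0:ℝ)..T, ∫ v in (0:ℝ)..T, (|u| ^ (2*H₁) + |v| ^ (2*H₂) + ε) ^ (-β)) ≤
      (1 + 1/(2*H₂*β - 1)) * ∫ u in (0:ℝ)..T, (u ^ (2*H₁) + ε) ^ (-(β - 1/(2*H₂))) :=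
        outerStep h1 h2 hT hε hβ2
  _ ≤ (1 + 1/(2*H₂*β - 1)) * ((1 + 1/(2*H₁*(β - 1/(2*H₂)) - 1)) *
        ε ^ (1/(2*H₁) - (β - 1/(2*H₂)))) :=
      mul_le_mul_of_nonneg_left (lemA h1 hT hε hβ1) hc₂

lemma U2 {H₁ H₂ β ε T : ℝ} (h1 : 0 < H₁) (h2 : 0 < H₂) (hT : 0 < T) (hε : 0 < ε)
    (heq : β = 1/(2*H₁) + 1/(2*H₂)) :
    (∫ u in (0:ℝ)..T, ∫ v in (0:ℝ)..T, (|u| ^ (2*H₁) + |v| ^ (2*H₂) + ε) ^ (-β)) ≤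
      (1 + 1/(2*H₂*β - 1)) * (1 + max 0 (Real.log T - 1/(2*H₁) * Real.log ε)) := by
  have he₁ : 0 < 1/(2*H₁) := by positivity
  have he₂ : 0 < 1/(2*H₂) := by positivity
  have hβ2 : 1 < 2*H₂*β := by
    have h : 1/(2*H₂) < β := by linarith
    rw [div_lt_iff₀ (by positivity)] at h
    linarith
  have hc₂ : (0:ℝ) ≤ 1 + 1/(2*H₂*β - 1) := by
    have : (0:ℝ) < 2*H₂*β - 1 := by linarith
    positivity
  have hrw : (∫ u in (0:ℝ)..T, (u ^ (2*H₁) + ε) ^ (-(β - 1/(2*H₂)))) =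
      ∫ u in (0:ℝ)..T, (u ^ (2*H₁) + ε) ^ (-(1/(2*H₁))) := by
    apply intervalIntegral.integral_congr
    intro x hx
    congr 1
    rw [heq]; ring
  calc (∫ u in (0:ℝ)..T, ∫ v in (0:ℝ)..T, (|u| ^ (2*H₁) + |v| ^ (2*H₂) + ε) ^ (-β)) ≤
      (1 + 1/(2*H₂*β - 1)) * ∫ u in (0:ℝ)..T, (u ^ (2*H₁) + ε) ^ (-(β - 1/(2*H₂))) :=
        outerStep h1 h2 hT hε hβ2
  _ = (1 + 1/(2*H₂*β - 1)) * ∫ u in (0:ℝ)..T, (u ^ (2*H₁) + ε) ^ (-(1/(2*H₁))) := by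
        rw [hrw]
  _ ≤ (1 + 1/(2*H₂*β - 1)) * (1 + max 0 (Real.log T - 1/(2*H₁) * Real.log ε)) := by
        apply mul_le_mul_of_nonneg_left ?_ hc₂
        exact lemLog h1 hT hε

lemma minlem2 {T e A M : ℝ} (hT : 0 < T) (he : 0 < e) (hA : 0 < A) (hAM : A ≤ M) :
    min 1 (T * M ^ (-e)) * A ^ e ≤ min T (A ^ e) := by
  have hM : 0 < M := lt_of_lt_of_le hA hAM
  have hAe : 0 < A ^ e := Real.rpow_pos_of_pos hA _
  have hMe : 0 < M ^ (-e) := Real.rpow_pos_of_pos hM _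
  apply le_min
  · calc min 1 (T * M ^ (-e)) * A ^ e ≤ T * M ^ (-e) * A ^ e :=
        mul_le_mul_of_nonneg_right (min_le_right _ _) hAe.le
    _ ≤ T * M ^ (-e) * M ^ e := by
        apply mul_le_mul_of_nonneg_left (Real.rpow_le_rpow hA.le hAM he.le) (by positivity)
    _ = T := by
        rw [mul_assoc, ← Real.rpow_add hM]
        simp
  · calc min 1 (T * M ^ (-e)) * A ^ e ≤ 1 * A ^ e :=
        mul_le_mul_of_nonneg_right (min_le_left _ _) hAe.le
    _ = A ^ e := one_mul _

lemma L0 {H₁ H₂ β ε T : ℝ} (h1 : 0 < H₁) (h2 : 0 < H₂) (hT : 0 < T) (hε : 0 < ε)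
    (hεT : ε ≤ T/2) (hβ : 0 ≤ β) :
    T * T * (T ^ (2*H₁) + T ^ (2*H₂) + T/2) ^ (-β) ≤
      ∫ u in (0:ℝ)..T, ∫ v in (0:ℝ)..T, (|u| ^ (2*H₁) + |v| ^ (2*H₂) + ε) ^ (-β) := by
  set M := T ^ (2*H₁) + T ^ (2*H₂) + T/2 with hMdef
  have hM : 0 < M := by positivity
  have hMb : 0 < M ^ (-β) := Real.rpow_pos_of_pos hM _
  have hpt : ∀ u ∈ Set.Icc (0:ℝ) T,
      T * M ^ (-β) ≤ ∫ v in (0:ℝ)..T, (|u| ^ (2*H₁) + |v| ^ (2*H₂) + ε) ^ (-β) := by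
    intro u hu
    rw [grew hT.le u hu.1]
    have hA : 0 < u ^ (2*H₁) + ε := by
      have := Real.rpow_nonneg hu.1 (2*H₁); linarith
    have := intervalIntegral.integral_mono_on (μ := volume) hT.le
      (_root_.intervalIntegrable_const (c := M ^ (-β)))
      (pint (p := 2*H₂) (q := -β) (by positivity) hA le_rfl hT.le)
      (fun v hv => by
        have hv2 : v ^ (2*H₂) ≤ T ^ (2*H₂) := Real.rpow_le_rpow hv.1 hv.2 (by positivity)
        have hu2 : u ^ (2*H₁) ≤ T ^ (2*H₁) := Real.rpow_le_rpow hu.1 hu.2 (by positivity)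
        have hbpos : 0 < v ^ (2*H₂) + (u ^ (2*H₁) + ε) := by
          have := Real.rpow_nonneg hv.1 (2*H₂); linarith
        exact Real.rpow_le_rpow_of_nonpos hbpos (by rw [hMdef]; linarith) (by linarith))
    simpa [smul_eq_mul] using this
  have houter := intervalIntegral.integral_mono_on (μ := volume) hT.le
    (_root_.intervalIntegrable_const (c := T * M ^ (-β)))
    (innerInt h1 h2 hε T 0 T) hpt
  simp only [intervalIntegral.integral_const, smul_eq_mul, sub_zero] at houter
  calc T * T * M ^ (-β) = T * (T * M ^ (-β)) := by ring
  _ ≤ _ := houter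

lemma L1 {H₁ H₂ β ε T : ℝ} (h1 : 0 < H₁) (h2 : 0 < H₂) (hT : 0 < T) (hε : 0 < ε)
    (hεT : ε ≤ T/2) (hβ : 0 ≤ β) :
    min 1 (T * (T/2) ^ (-(1/(2*H₁)))) * min 1 (T * (T/2) ^ (-(1/(2*H₂)))) * 4 ^ (-β) *
      ε ^ (1/(2*H₁) + 1/(2*H₂) - β) ≤
      ∫ u in (0:ℝ)..T, ∫ v in (0:ℝ)..T, (|u| ^ (2*H₁) + |v| ^ (2*H₂) + ε) ^ (-β) := by
  have he₁ : (0:ℝ) < 1/(2*H₁) := by positivity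
  have he₂ : (0:ℝ) < 1/(2*H₂) := by positivity
  set δ₁ := min T (ε ^ (1/(2*H₁))) with hδ₁def
  set m₂ := min T (ε ^ (1/(2*H₂))) with hm₂def
  have hδ₁0 : 0 < δ₁ := lt_min hT (Real.rpow_pos_of_pos hε _)
  have hδ₁T : δ₁ ≤ T := min_le_left _ _
  have hm₂0 : 0 < m₂ := lt_min hT (Real.rpow_pos_of_pos hε _)
  have h4ε : (0:ℝ) < (4*ε) ^ (-β) := Real.rpow_pos_of_pos (by linarith) _
  have hpt : ∀ u ∈ Set.Icc (0:ℝ) δ₁,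
      m₂ * (4*ε) ^ (-β) ≤ ∫ v in (0:ℝ)..T, (|u| ^ (2*H₁) + |v| ^ (2*H₂) + ε) ^ (-β) := by
    intro u hu
    rw [grew hT.le u hu.1]
    have hA : 0 < u ^ (2*H₁) + ε := by
      have := Real.rpow_nonneg hu.1 (2*H₁); linarith
    have hεA : ε ≤ u ^ (2*H₁) + ε := by
      have := Real.rpow_nonneg hu.1 (2*H₁); linarith
    have hA2ε : u ^ (2*H₁) + ε ≤ 2*ε := by
      have huδ : u ≤ ε ^ (1/(2*H₁)) := le_trans hu.2 (min_le_right _ _)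
      have : u ^ (2*H₁) ≤ (ε ^ (1/(2*H₁))) ^ (2*H₁) :=
        Real.rpow_le_rpow hu.1 huδ (by positivity)
      rw [← Real.rpow_mul hε.le, show 1/(2*H₁) * (2*H₁) = 1 by field_simp, Real.rpow_one] at this
      linarith
    have step1 : m₂ ≤ min T ((u ^ (2*H₁) + ε) ^ (1/(2*H₂))) :=
      min_le_min le_rfl (Real.rpow_le_rpow hε.le hεA he₂.le)
    have step2 : (4*ε) ^ (-β) ≤ (2*(u ^ (2*H₁) + ε)) ^ (-β) :=
      Real.rpow_le_rpow_of_nonpos (by linarith) (by linarith) (by linarith)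
    calc m₂ * (4*ε) ^ (-β) ≤
        min T ((u ^ (2*H₁) + ε) ^ (1/(2*H₂))) * (2*(u ^ (2*H₁) + ε)) ^ (-β) :=
          mul_le_mul step1 step2 h4ε.le (le_trans hm₂0.le step1)
    _ ≤ _ := lemLow h2 hT hA hβ
  have hsub : δ₁ * (m₂ * (4*ε) ^ (-β)) ≤
      ∫ u in (0:ℝ)..δ₁, ∫ v in (0:ℝ)..T, (|u| ^ (2*H₁) + |v| ^ (2*H₂) + ε) ^ (-β) := by
    have := intervalIntegral.integral_mono_on (μ := volume) hδ₁0.le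
      (_root_.intervalIntegrable_const (c := m₂ * (4*ε) ^ (-β)))
      (innerInt h1 h2 hε T 0 δ₁) hpt
    simp only [intervalIntegral.integral_const, smul_eq_mul, sub_zero] at this
    linarith [this]
  have hsplit : (∫ u in (0:ℝ)..T, ∫ v in (0:ℝ)..T, (|u| ^ (2*H₁) + |v| ^ (2*H₂) + ε) ^ (-β)) =
      (∫ u in (0:ℝ)..δ₁, ∫ v in (0:ℝ)..T, (|u| ^ (2*H₁) + |v| ^ (2*H₂) + ε) ^ (-β)) +
      ∫ u in δ₁..T, ∫ v in (0:ℝ)..T, (|u| ^ (2*H₁) + |v| ^ (2*H₂) + ε) ^ (-β) :=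
    (intervalIntegral.integral_add_adjacent_intervals
      (innerInt h1 h2 hε T 0 δ₁) (innerInt h1 h2 hε T δ₁ T)).symm
  have htail : 0 ≤ ∫ u in δ₁..T, ∫ v in (0:ℝ)..T, (|u| ^ (2*H₁) + |v| ^ (2*H₂) + ε) ^ (-β) :=
    intervalIntegral.integral_nonneg hδ₁T (fun u _ => innerNonneg hT.le hε.le u)
  have harith : min 1 (T * (T/2) ^ (-(1/(2*H₁)))) * min 1 (T * (T/2) ^ (-(1/(2*H₂)))) *
      4 ^ (-β) * ε ^ (1/(2*H₁) + 1/(2*H₂) - β) ≤ δ₁ * (m₂ * (4*ε) ^ (-β)) := by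
    have hκ₁ : min 1 (T * (T/2) ^ (-(1/(2*H₁)))) * ε ^ (1/(2*H₁)) ≤ δ₁ :=
      minlem2 hT he₁ hε hεT
    have hκ₂ : min 1 (T * (T/2) ^ (-(1/(2*H₂)))) * ε ^ (1/(2*H₂)) ≤ m₂ :=
      minlem2 hT he₂ hε hεT
    have hκ₁0 : 0 < min 1 (T * (T/2) ^ (-(1/(2*H₁)))) :=
      lt_min one_pos (by positivity)
    have hκ₂0 : 0 < min 1 (T * (T/2) ^ (-(1/(2*H₂)))) :=
      lt_min one_pos (by positivity)
    have hrw : min 1 (T * (T/2) ^ (-(1/(2*H₁)))) * min 1 (T * (T/2) ^ (-(1/(2*H₂)))) *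
        4 ^ (-β) * ε ^ (1/(2*H₁) + 1/(2*H₂) - β) =
        (min 1 (T * (T/2) ^ (-(1/(2*H₁)))) * ε ^ (1/(2*H₁))) *
        ((min 1 (T * (T/2) ^ (-(1/(2*H₂)))) * ε ^ (1/(2*H₂))) * (4*ε) ^ (-β)) := by
      rw [Real.mul_rpow (by norm_num) hε.le,
        show 1/(2*H₁) + 1/(2*H₂) - β = 1/(2*H₁) + (1/(2*H₂) + -β) by ring,
        Real.rpow_add hε, Real.rpow_add hε]
      ring
    rw [hrw]
    apply mul_le_mul hκ₁ (mul_le_mul_of_nonneg_right hκ₂ h4ε.le) ?_ hδ₁0.le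
    positivity
  rw [hsplit]
  linarith

lemma L2 {H₁ H₂ β ε T : ℝ} (h1 : 0 < H₁) (h2 : 0 < H₂) (hT : 0 < T) (hε : 0 < ε)
    (hεT : ε ≤ T/2) (hβ : 0 ≤ β) (heq : β = 1/(2*H₁) + 1/(2*H₂))
    (hx : ε ^ (1/(2*H₁)) ≤ T) :
    min 1 (T * (T ^ (2*H₁) + T/2) ^ (-(1/(2*H₂)))) * 2 ^ (-β) *
      (2 ^ (-(1/(2*H₁))) * (Real.log T - 1/(2*H₁) * Real.log ε)) ≤
      ∫ u in (0:ℝ)..T, ∫ v in (0:ℝ)..T, (|u| ^ (2*H₁) + |v| ^ (2*H₂) + ε) ^ (-β) := by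
  have he₁ : (0:ℝ) < 1/(2*H₁) := by positivity
  have he₂ : (0:ℝ) < 1/(2*H₂) := by positivity
  set M₁ := T ^ (2*H₁) + T/2 with hM₁def
  have hM₁ : 0 < M₁ := by positivity
  set κ := min 1 (T * M₁ ^ (-(1/(2*H₂)))) with hκdef
  have hκ0 : 0 < κ := lt_min one_pos (by positivity)
  have h2β : (0:ℝ) < 2 ^ (-β) := Real.rpow_pos_of_pos (by norm_num) _
  have hpt : ∀ u ∈ Set.Icc (0:ℝ) T,
      κ * 2 ^ (-β) * (u ^ (2*H₁) + ε) ^ (-(1/(2*H₁))) ≤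
        ∫ v in (0:ℝ)..T, (|u| ^ (2*H₁) + |v| ^ (2*H₂) + ε) ^ (-β) := by
    intro u hu
    rw [grew hT.le u hu.1]
    have hA : 0 < u ^ (2*H₁) + ε := by
      have := Real.rpow_nonneg hu.1 (2*H₁); linarith
    have hAM : u ^ (2*H₁) + ε ≤ M₁ := by
      have : u ^ (2*H₁) ≤ T ^ (2*H₁) := Real.rpow_le_rpow hu.1 hu.2 (by positivity)
      rw [hM₁def]; linarith
    have hmin : κ * (u ^ (2*H₁) + ε) ^ (1/(2*H₂)) ≤
        min T ((u ^ (2*H₁) + ε) ^ (1/(2*H₂))) := minlem2 hT he₂ hA hAM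
    have hAe : 0 < (u ^ (2*H₁) + ε) ^ (1/(2*H₂)) := Real.rpow_pos_of_pos hA _
    have hid : κ * 2 ^ (-β) * (u ^ (2*H₁) + ε) ^ (-(1/(2*H₁))) =
        (κ * (u ^ (2*H₁) + ε) ^ (1/(2*H₂))) * (2*(u ^ (2*H₁) + ε)) ^ (-β) := by
      rw [Real.mul_rpow (by norm_num) hA.le]
      have : (u ^ (2*H₁) + ε) ^ (1/(2*H₂)) * (u ^ (2*H₁) + ε) ^ (-β) =
          (u ^ (2*H₁) + ε) ^ (-(1/(2*H₁))) := by
        rw [← Real.rpow_add hA]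
        congr 1
        rw [heq]; ring
      calc κ * 2 ^ (-β) * (u ^ (2*H₁) + ε) ^ (-(1/(2*H₁))) =
          κ * 2 ^ (-β) * ((u ^ (2*H₁) + ε) ^ (1/(2*H₂)) * (u ^ (2*H₁) + ε) ^ (-β)) := by
            rw [this]
      _ = κ * (u ^ (2*H₁) + ε) ^ (1/(2*H₂)) * (2 ^ (-β) * (u ^ (2*H₁) + ε) ^ (-β)) := by ring
    rw [hid]
    calc (κ * (u ^ (2*H₁) + ε) ^ (1/(2*H₂))) * (2*(u ^ (2*H₁) + ε)) ^ (-β) ≤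
        min T ((u ^ (2*H₁) + ε) ^ (1/(2*H₂))) * (2*(u ^ (2*H₁) + ε)) ^ (-β) :=
          mul_le_mul_of_nonneg_right hmin (Real.rpow_nonneg (by linarith) _)
    _ ≤ _ := lemLow h2 hT hA hβ
  have houter := intervalIntegral.integral_mono_on (μ := volume) hT.le
    ((pint (p := 2*H₁) (q := -(1/(2*H₁))) (by positivity) hε le_rfl hT.le).const_mul
      (κ * 2 ^ (-β)))
    (innerInt h1 h2 hε T 0 T) hpt
  rw [intervalIntegral.integral_const_mul] at houter
  have hlog := lemLogLow h1 hT hε hx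
  calc κ * 2 ^ (-β) * (2 ^ (-(1/(2*H₁))) * (Real.log T - 1/(2*H₁) * Real.log ε)) ≤
      κ * 2 ^ (-β) * ∫ u in (0:ℝ)..T, (u ^ (2*H₁) + ε) ^ (-(1/(2*H₁))) := by
        exact mul_le_mul_of_nonneg_left hlog (by positivity)
  _ ≤ _ := houter

lemma U3 {H₁ H₂ β ε T γ₁ γ₂ : ℝ} (h1 : 0 < H₁) (h2 : 0 < H₂) (hT : 0 < T) (hε : 0 < ε)
    (hγ₁0 : 0 < γ₁) (hγ₂0 : 0 < γ₂) (hγsum : γ₁ + γ₂ = β)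
    (hp₁ : 2*H₁*γ₁ < 1) (hp₂ : 2*H₂*γ₂ < 1) :
    (∫ u in (0:ℝ)..T, ∫ v in (0:ℝ)..T, (|u| ^ (2*H₁) + |v| ^ (2*H₂) + ε) ^ (-β)) ≤
      T ^ (1-2*H₁*γ₁)/(1-2*H₁*γ₁) * (T ^ (1-2*H₂*γ₂)/(1-2*H₂*γ₂)) := by
  set E₂ := ∫ v in (0:ℝ)..T, (v ^ (2*H₂) + ε) ^ (-γ₂) with hE₂def
  have hE₂nn : 0 ≤ E₂ := by
    rw [hE₂def]
    apply intervalIntegral.integral_nonneg hT.le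
    intro x hx
    apply Real.rpow_nonneg
    have := Real.rpow_nonneg hx.1 (2*H₂); linarith
  have hE₂ : E₂ ≤ T ^ (1-2*H₂*γ₂)/(1-2*H₂*γ₂) := lemC h2 hT hε hγ₂0 hp₂
  have hpt : ∀ u : ℝ, 0 < u → u ≤ T →
      (∫ v in (0:ℝ)..T, (|u| ^ (2*H₁) + |v| ^ (2*H₂) + ε) ^ (-β)) ≤
        u ^ (-(2*H₁*γ₁)) * E₂ := by
    intro u hu0 huT
    rw [grew hT.le u hu0.le]
    have hx0 : 0 < u ^ (2*H₁) := Real.rpow_pos_of_pos hu0 _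
    have key : ∀ v ∈ Set.Icc (0:ℝ) T,
        (v ^ (2*H₂) + (u ^ (2*H₁) + ε)) ^ (-β) ≤
          u ^ (-(2*H₁*γ₁)) * (v ^ (2*H₂) + ε) ^ (-γ₂) := by
      intro v hv
      have hy0 : 0 < v ^ (2*H₂) + ε := by
        have := Real.rpow_nonneg hv.1 (2*H₂); linarith
      set x := u ^ (2*H₁) with hxdef
      set y := v ^ (2*H₂) + ε with hydef
      have hbase : v ^ (2*H₂) + (u ^ (2*H₁) + ε) = x + y := by rw [hxdef, hydef]; ring
      rw [hbase]
      have hxy : x ^ γ₁ * y ^ γ₂ ≤ (x+y) ^ β := by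
        rw [← hγsum, Real.rpow_add (by linarith)]
        exact mul_le_mul (Real.rpow_le_rpow hx0.le (by linarith) hγ₁0.le)
          (Real.rpow_le_rpow hy0.le (by linarith) hγ₂0.le)
          (Real.rpow_nonneg hy0.le _) (Real.rpow_nonneg (by linarith) _)
      have hprodpos : 0 < x ^ γ₁ * y ^ γ₂ :=
        mul_pos (Real.rpow_pos_of_pos hx0 _) (Real.rpow_pos_of_pos hy0 _)
      have hchain : (x+y) ^ (-β) ≤ x ^ (-γ₁) * y ^ (-γ₂) := by
        rw [Real.rpow_neg (by linarith : (0:ℝ) ≤ x+y), Real.rpow_neg hx0.le,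
          Real.rpow_neg hy0.le, ← mul_inv]
        exact inv_anti₀ hprodpos hxy
      calc (x+y) ^ (-β) ≤ x ^ (-γ₁) * y ^ (-γ₂) := hchain
      _ = u ^ (-(2*H₁*γ₁)) * y ^ (-γ₂) := by
          rw [hxdef, ← Real.rpow_mul hu0.le, show 2*H₁ * -γ₁ = -(2*H₁*γ₁) by ring]
    have hmono := intervalIntegral.integral_mono_on (μ := volume) hT.le
      (pint (p := 2*H₂) (q := -β) (by positivity)
        (by have := Real.rpow_nonneg hu0.le (2*H₁); linarith) le_rfl hT.le)
      ((pint (p := 2*H₂) (q := -γ₂) (by positivity) hε le_rfl hT.le).const_mul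
        (u ^ (-(2*H₁*γ₁)))) key
    rw [intervalIntegral.integral_const_mul] at hmono
    exact hmono
  have hae1 : ∀ᵐ x ∂(volume.restrict (Set.Icc (0:ℝ) T)), x ≠ 0 :=
    ae_restrict_of_ae (by simp [ae_iff, Set.setOf_eq_eq_singleton'])
  have hae2 : ∀ᵐ x ∂(volume.restrict (Set.Icc (0:ℝ) T)), x ∈ Set.Icc (0:ℝ) T :=
    ae_restrict_mem measurableSet_Icc
  have houter := intervalIntegral.integral_mono_ae_restrict (μ := volume) hT.le
    (innerInt h1 h2 hε T 0 T)
    ((intervalIntegrable_rpow' (by linarith : (-1:ℝ) < -(2*H₁*γ₁))).mul_const E₂)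
    (by
      filter_upwards [hae1, hae2] with u hu0 hum
      exact hpt u (lt_of_le_of_ne hum.1 (Ne.symm hu0)) hum.2)
  rw [intervalIntegral.integral_mul_const] at houter
  have hint : (∫ u in (0:ℝ)..T, u ^ (-(2*H₁*γ₁))) = T ^ (1-2*H₁*γ₁)/(1-2*H₁*γ₁) := by
    rw [integral_rpow (Or.inl (by linarith))]
    rw [Real.zero_rpow (by intro h; linarith : -(2*H₁*γ₁) + 1 ≠ 0)]
    rw [show -(2*H₁*γ₁) + 1 = 1 - 2*H₁*γ₁ by ring]
    ring
  rw [hint] at houter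
  calc (∫ u in (0:ℝ)..T, ∫ v in (0:ℝ)..T, (|u| ^ (2*H₁) + |v| ^ (2*H₂) + ε) ^ (-β)) ≤
      T ^ (1-2*H₁*γ₁)/(1-2*H₁*γ₁) * E₂ := houter
  _ ≤ T ^ (1-2*H₁*γ₁)/(1-2*H₁*γ₁) * (T ^ (1-2*H₂*γ₂)/(1-2*H₂*γ₂)) := by
      apply mul_le_mul_of_nonneg_left hE₂
      have h1p : 0 < 1-2*H₁*γ₁ := by linarith
      positivity

lemma logmono {x y : ℝ} (hx : 0 < x) (h : x ≤ y) : Real.log x ≤ Real.log y :=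
  (Real.log_le_log_iff hx (lt_of_lt_of_le hx h)).mpr h


set_option maxHeartbeats 2000000 in
theorem stmt14
    (T : ℝ) (hT : 0 < T) (α : ℝ) (hα : 0 ≤ α)
    (H₁ H₂ : ℝ) (hH₁ : H₁ ∈ Set.Ioo (0 : ℝ) 1) (hH₂ : H₂ ∈ Set.Ioo (0 : ℝ) 1)
    (d : ℕ) (hd : 1 ≤ d)
    (J : ℝ → ℝ)
    (hJ : ∀ ε : ℝ, J ε =
      ∫ u in (0 : ℝ)..T, ∫ v in (0 : ℝ)..T,
        (u ^ (2 * H₁) + v ^ (2 * H₂) + ε) ^ (-(d : ℝ) / 2 - α)) :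
    ∃ c C : ℝ, 0 < c ∧ c ≤ C ∧
      ∀ ε ∈ Set.Ioo (0 : ℝ) (T / 2),
        ((H₁ + H₂) / (H₁ * H₂) < d + 2 * α →
          c * ε ^ ((H₁ + H₂) / (2 * H₁ * H₂) - d / 2 - α) ≤ J ε ∧
            J ε ≤ C * ε ^ ((H₁ + H₂) / (2 * H₁ * H₂) - d / 2 - α)) ∧
        ((H₁ + H₂) / (H₁ * H₂) = d + 2 * α →
          c * Real.log (1 + ε ^ (-(1 : ℝ) / 2)) ≤ J ε ∧
            J ε ≤ C * Real.log (1 + ε ^ (-(1 : ℝ) / 2))) ∧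
        ((d : ℝ) + 2 * α < (H₁ + H₂) / (H₁ * H₂) →
          c ≤ J ε ∧ J ε ≤ C) := by
  obtain ⟨hH₁0, hH₁1⟩ := hH₁
  obtain ⟨hH₂0, hH₂1⟩ := hH₂
  have hd1 : (1:ℝ) ≤ (d:ℝ) := by exact_mod_cast hd
  set β := (d:ℝ)/2 + α with hβdef
  have hβ0 : 0 < β := by rw [hβdef]; linarith
  have he₁ : (0:ℝ) < 1/(2*H₁) := by positivity
  have he₂ : (0:ℝ) < 1/(2*H₂) := by positivity
  have hJD : ∀ ε : ℝ, J ε = ∫ u in (0:ℝ)..T, ∫ v in (0:ℝ)..T,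
      (|u| ^ (2*H₁) + |v| ^ (2*H₂) + ε) ^ (-β) := by
    intro ε
    rw [hJ ε]
    apply intervalIntegral.integral_congr
    intro u hu
    rw [Set.uIcc_of_le hT.le] at hu
    show (∫ v in (0:ℝ)..T, (u ^ (2*H₁) + v ^ (2*H₂) + ε) ^ (-(d:ℝ)/2 - α)) =
      ∫ v in (0:ℝ)..T, (|u| ^ (2*H₁) + |v| ^ (2*H₂) + ε) ^ (-β)
    apply intervalIntegral.integral_congr
    intro v hv
    rw [Set.uIcc_of_le hT.le] at hv
    show (u ^ (2*H₁) + v ^ (2*H₂) + ε) ^ (-(d:ℝ)/2 - α) =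
      (|u| ^ (2*H₁) + |v| ^ (2*H₂) + ε) ^ (-β)
    rw [abs_of_nonneg hu.1, abs_of_nonneg hv.1]
    congr 1
    rw [hβdef]; ring
  have hkey : (H₁ + H₂) / (H₁ * H₂) = 2*(1/(2*H₁) + 1/(2*H₂)) := by
    field_simp
    ring
  have hkey2 : (d:ℝ) + 2*α = 2*β := by rw [hβdef]; ring
  have hexp : (H₁ + H₂) / (2*H₁*H₂) - (d:ℝ)/2 - α = 1/(2*H₁) + 1/(2*H₂) - β := by
    rw [hβdef]
    field_simp
    ring
  set c₃ := T * T * (T ^ (2*H₁) + T ^ (2*H₂) + T/2) ^ (-β) with hc₃def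
  have hc₃0 : 0 < c₃ := by positivity
  have hlowC : ∀ ε ∈ Set.Ioo (0:ℝ) (T/2), c₃ ≤ J ε := by
    intro ε hε
    rw [hJD ε]
    exact L0 hH₁0 hH₂0 hT hε.1 hε.2.le hβ0.le
  rcases lt_trichotomy ((H₁ + H₂) / (H₁ * H₂)) ((d:ℝ) + 2*α) with hcase | hcase | hcase
  · -- case (i)
    have hlt : 1/(2*H₁) + 1/(2*H₂) < β := by
      rw [hkey, hkey2] at hcase
      linarith
    have hβ2 : 1 < 2*H₂*β := by
      have h : 1/(2*H₂) < β := by linarith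
      rw [div_lt_iff₀ (by positivity)] at h
      linarith
    have hβ1 : 1 < 2*H₁*(β - 1/(2*H₂)) := by
      have h : 1/(2*H₁) < β - 1/(2*H₂) := by linarith
      rw [div_lt_iff₀ (by positivity)] at h
      linarith
    set c₀ := min 1 (T*(T/2) ^ (-(1/(2*H₁)))) * min 1 (T*(T/2) ^ (-(1/(2*H₂)))) * 4 ^ (-β)
      with hc₀def
    have hc₀ : 0 < c₀ := by
      have k1 : (0:ℝ) < min 1 (T*(T/2) ^ (-(1/(2*H₁)))) := lt_min one_pos (by positivity)
      have k2 : (0:ℝ) < min 1 (T*(T/2) ^ (-(1/(2*H₂)))) := lt_min one_pos (by positivity)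
      have k3 : (0:ℝ) < (4:ℝ) ^ (-β) := Real.rpow_pos_of_pos (by norm_num) _
      positivity
    set C₀ := (1 + 1/(2*H₂*β - 1)) * (1 + 1/(2*H₁*(β - 1/(2*H₂)) - 1)) with hC₀def
    have hC₀ : 0 < C₀ := by
      have k1 : (0:ℝ) < 2*H₂*β - 1 := by linarith
      have k2 : (0:ℝ) < 2*H₁*(β - 1/(2*H₂)) - 1 := by linarith
      positivity
    refine ⟨min c₀ C₀, max c₀ C₀, lt_min hc₀ hC₀,
      le_trans (min_le_left _ _) (le_max_left _ _), ?_⟩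
    intro ε hε
    have hεE : (0:ℝ) ≤ ε ^ ((H₁ + H₂) / (2*H₁*H₂) - (d:ℝ)/2 - α) :=
      Real.rpow_nonneg hε.1.le _
    refine ⟨fun _ => ⟨?_, ?_⟩, fun h => absurd hcase (by rw [h]; exact lt_irrefl _),
      fun h => absurd hcase (not_lt.2 h.le)⟩
    · calc min c₀ C₀ * ε ^ ((H₁ + H₂) / (2*H₁*H₂) - (d:ℝ)/2 - α) ≤
          c₀ * ε ^ ((H₁ + H₂) / (2*H₁*H₂) - (d:ℝ)/2 - α) :=
            mul_le_mul_of_nonneg_right (min_le_left _ _) hεE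
      _ = c₀ * ε ^ (1/(2*H₁) + 1/(2*H₂) - β) := by rw [hexp]
      _ ≤ J ε := by
          rw [hJD ε, hc₀def]
          exact L1 hH₁0 hH₂0 hT hε.1 hε.2.le hβ0.le
    · calc J ε ≤ (1 + 1/(2*H₂*β - 1)) * ((1 + 1/(2*H₁*(β - 1/(2*H₂)) - 1)) *
            ε ^ (1/(2*H₁) - (β - 1/(2*H₂)))) := by
              rw [hJD ε]
              exact U1 hH₁0 hH₂0 hT hε.1 hlt
      _ = C₀ * ε ^ ((H₁ + H₂) / (2*H₁*H₂) - (d:ℝ)/2 - α) := by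
          rw [hexp, hC₀def, show ε ^ (1/(2*H₁) - (β - 1/(2*H₂))) =
            ε ^ (1/(2*H₁) + 1/(2*H₂) - β) from by congr 1; ring]
          ring
      _ ≤ max c₀ C₀ * ε ^ ((H₁ + H₂) / (2*H₁*H₂) - (d:ℝ)/2 - α) :=
          mul_le_mul_of_nonneg_right (le_max_right _ _) hεE
  · -- case (ii)
    have heq : β = 1/(2*H₁) + 1/(2*H₂) := by
      rw [hkey, hkey2] at hcase
      linarith
    have hβ2 : 1 < 2*H₂*β := by
      have h : 1/(2*H₂) < β := by linarith
      rw [div_lt_iff₀ (by positivity)] at h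
      linarith
    have hL₀ : 0 < Real.log (1 + (T/2) ^ (-(1:ℝ)/2)) := by
      apply Real.log_pos
      have : (0:ℝ) < (T/2) ^ (-(1:ℝ)/2) := Real.rpow_pos_of_pos (by linarith) _
      linarith
    have ha1 : (1:ℝ) ≤ 1 + max 0 (Real.log T) := by
      have := le_max_left (0:ℝ) (Real.log T)
      linarith
    have hc₂0 : (0:ℝ) < 1 + 1/(2*H₂*β - 1) := by
      have : (0:ℝ) < 2*H₂*β - 1 := by linarith
      positivity
    set C₀ := (1 + 1/(2*H₂*β - 1)) *
      ((1 + max 0 (Real.log T)) / Real.log (1 + (T/2) ^ (-(1:ℝ)/2)) + 2*(1/(2*H₁)))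
      with hC₀def
    have hC₀0 : 0 < C₀ :=
      mul_pos hc₂0 (add_pos (div_pos (by linarith) hL₀) (by positivity))
    set ε₁ := min 1 (T ^ (4*H₁)) with hε₁def
    have hε₁0 : 0 < ε₁ := lt_min one_pos (by positivity)
    have hε₁1 : ε₁ ≤ 1 := min_le_left _ _
    have hκ0 : (0:ℝ) < min 1 (T * (T ^ (2*H₁) + T/2) ^ (-(1/(2*H₂)))) :=
      lt_min one_pos (by positivity)
    have h2β : (0:ℝ) < 2 ^ (-β) := Real.rpow_pos_of_pos (by norm_num) _
    have h2e : (0:ℝ) < 2 ^ (-(1/(2*H₁))) := Real.rpow_pos_of_pos (by norm_num) _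
    set aa := min 1 (T * (T ^ (2*H₁) + T/2) ^ (-(1/(2*H₂)))) * 2 ^ (-β) *
      2 ^ (-(1/(2*H₁))) * (1/(2*H₁)/2) with haadef
    have haa0 : 0 < aa := by
      rw [haadef]
      exact mul_pos (mul_pos (mul_pos hκ0 h2β) h2e) (by positivity)
    have hlog2 : 0 < Real.log 2 := Real.log_pos (by norm_num)
    set K := Real.log 2 / c₃ + 1/(2*aa) with hKdef
    have hK0 : 0 < K := by
      rw [hKdef]
      exact add_pos (div_pos hlog2 hc₃0) (div_pos one_pos (by linarith))
    have hL₁0 : 0 < Real.log (1 + ε₁ ^ (-(1:ℝ)/2)) := by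
      apply Real.log_pos
      have : (0:ℝ) < ε₁ ^ (-(1:ℝ)/2) := Real.rpow_pos_of_pos hε₁0 _
      linarith
    set c₀ := min (1/K) (c₃ / Real.log (1 + ε₁ ^ (-(1:ℝ)/2))) with hc₀def
    have hc₀0 : 0 < c₀ := lt_min (div_pos one_pos hK0) (div_pos hc₃0 hL₁0)
    refine ⟨min c₀ C₀, max c₀ C₀, lt_min hc₀0 hC₀0,
      le_trans (min_le_left _ _) (le_max_left _ _), ?_⟩
    intro ε hε
    have hεp : (0:ℝ) < ε ^ (-(1:ℝ)/2) := Real.rpow_pos_of_pos hε.1 _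
    have hL : 0 < Real.log (1 + ε ^ (-(1:ℝ)/2)) := Real.log_pos (by linarith)
    refine ⟨fun h => absurd h (by rw [hcase]; exact lt_irrefl _), fun _ => ⟨?_, ?_⟩,
      fun h => absurd h (by rw [hcase]; exact lt_irrefl _)⟩
    · -- lower bound
      have hstep : c₀ * Real.log (1 + ε ^ (-(1:ℝ)/2)) ≤ J ε := by
        rcases le_or_gt ε ε₁ with hsm | hbig
        · have hεle1 : ε ≤ 1 := le_trans hsm hε₁1
          have hlogε : Real.log ε ≤ 0 := Real.log_nonpos hε.1.le hεle1
          have hxT : ε ^ (1/(2*H₁)) ≤ T := by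
            rcases le_or_gt 1 T with hT1 | hT1
            · calc ε ^ (1/(2*H₁)) ≤ 1 := Real.rpow_le_one hε.1.le hεle1 he₁.le
              _ ≤ T := hT1
            · have hsm' : ε ≤ T ^ (4*H₁) := le_trans hsm (min_le_right _ _)
              calc ε ^ (1/(2*H₁)) ≤ (T ^ (4*H₁)) ^ (1/(2*H₁)) :=
                    Real.rpow_le_rpow hε.1.le hsm' he₁.le
              _ = T ^ (2:ℝ) := by
                  rw [← Real.rpow_mul hT.le]
                  congr 1
                  field_simp
                  ring
              _ ≤ T ^ (1:ℝ) := Real.rpow_le_rpow_of_exponent_ge hT hT1.le (by norm_num)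
              _ = T := Real.rpow_one T
          have hlogT : (1/(2*H₁)/2) * (-Real.log ε) ≤
              Real.log T - 1/(2*H₁) * Real.log ε := by
            rcases le_or_gt 1 T with hT1 | hT1
            · have hTnn : 0 ≤ Real.log T := Real.log_nonneg hT1
              have hz : 0 ≤ (1/(2*H₁)/2) * (-Real.log ε) :=
                mul_nonneg (by positivity) (by linarith)
              linarith
            · have hsm' : ε ≤ T ^ (4*H₁) := le_trans hsm (min_le_right _ _)
              have hle4 : Real.log ε ≤ 4*H₁ * Real.log T := by
                calc Real.log ε ≤ Real.log (T ^ (4*H₁)) := logmono hε.1 hsm'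
                _ = 4*H₁ * Real.log T := Real.log_rpow hT _
              have h4 : (1/(2*H₁)/2) * (4*H₁) = 1 := by
                field_simp
                ring
              have h5 : (1/(2*H₁)/2) * Real.log ε ≤ Real.log T := by
                have h6 := mul_le_mul_of_nonneg_left hle4
                  (by positivity : (0:ℝ) ≤ 1/(2*H₁)/2)
                calc (1/(2*H₁)/2) * Real.log ε ≤
                    (1/(2*H₁)/2) * (4*H₁ * Real.log T) := h6
                _ = Real.log T := by
                    rw [show (1/(2*H₁)/2) * (4*H₁ * Real.log T) =
                      ((1/(2*H₁)/2) * (4*H₁)) * Real.log T by ring, h4, one_mul]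
              linarith
          have hlow := L2 hH₁0 hH₂0 hT hε.1 hε.2.le hβ0.le heq hxT
          have hJ1 : aa * (-Real.log ε) ≤ J ε := by
            rw [hJD ε]
            refine le_trans ?_ hlow
            rw [haadef]
            have hmul := mul_le_mul_of_nonneg_left hlogT
              (le_of_lt (mul_pos (mul_pos hκ0 h2β) h2e))
            calc min 1 (T * (T ^ (2*H₁) + T/2) ^ (-(1/(2*H₂)))) * 2 ^ (-β) *
                2 ^ (-(1/(2*H₁))) * (1/(2*H₁)/2) * (-Real.log ε)
                = (min 1 (T * (T ^ (2*H₁) + T/2) ^ (-(1/(2*H₂)))) * 2 ^ (-β) *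
                    2 ^ (-(1/(2*H₁)))) * ((1/(2*H₁)/2) * (-Real.log ε)) := by ring
            _ ≤ (min 1 (T * (T ^ (2*H₁) + T/2) ^ (-(1/(2*H₂)))) * 2 ^ (-β) *
                    2 ^ (-(1/(2*H₁)))) *
                  (Real.log T - 1/(2*H₁) * Real.log ε) := hmul
            _ = min 1 (T * (T ^ (2*H₁) + T/2) ^ (-(1/(2*H₂)))) * 2 ^ (-β) *
                  (2 ^ (-(1/(2*H₁))) * (Real.log T - 1/(2*H₁) * Real.log ε)) := by ring
          have hLup : Real.log (1 + ε ^ (-(1:ℝ)/2)) ≤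
              Real.log 2 + (1/2) * (-Real.log ε) := by
            have h1 : (1:ℝ) ≤ ε ^ (-(1:ℝ)/2) := by
              have := Real.rpow_le_rpow_of_nonpos hε.1 hεle1
                (by norm_num : -(1:ℝ)/2 ≤ 0)
              rwa [Real.one_rpow] at this
            calc Real.log (1 + ε ^ (-(1:ℝ)/2)) ≤
                Real.log (2 * ε ^ (-(1:ℝ)/2)) := logmono (by linarith) (by linarith)
            _ = Real.log 2 + Real.log (ε ^ (-(1:ℝ)/2)) :=
                Real.log_mul (by norm_num) (by positivity)
            _ = Real.log 2 + (1/2) * (-Real.log ε) := by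
                rw [Real.log_rpow hε.1]
                ring
          have hKJ : Real.log (1 + ε ^ (-(1:ℝ)/2)) ≤ K * J ε := by
            have hJc₃ : c₃ ≤ J ε := hlowC ε hε
            have t1 : Real.log 2 ≤ (Real.log 2 / c₃) * J ε := by
              rw [div_mul_eq_mul_div, le_div_iff₀ hc₃0]
              exact mul_le_mul_of_nonneg_left hJc₃ hlog2.le
            have t2 : (1/2)*(-Real.log ε) ≤ (1/(2*aa)) * J ε := by
              have hscaled := mul_le_mul_of_nonneg_left hJ1
                (le_of_lt (div_pos one_pos (by linarith : (0:ℝ) < 2*aa)))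
              have heq2 : (1/(2*aa)) * (aa * (-Real.log ε)) =
                  (1/2) * (-Real.log ε) := by
                field_simp
              linarith
            rw [hKdef]
            calc Real.log (1 + ε ^ (-(1:ℝ)/2)) ≤
                Real.log 2 + (1/2)*(-Real.log ε) := hLup
            _ ≤ (Real.log 2 / c₃) * J ε + (1/(2*aa)) * J ε := add_le_add t1 t2
            _ = (Real.log 2 / c₃ + 1/(2*aa)) * J ε := by ring
          calc c₀ * Real.log (1 + ε ^ (-(1:ℝ)/2)) ≤
              (1/K) * Real.log (1 + ε ^ (-(1:ℝ)/2)) :=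
                mul_le_mul_of_nonneg_right (min_le_left _ _) hL.le
          _ ≤ (1/K) * (K * J ε) :=
                mul_le_mul_of_nonneg_left hKJ (by positivity)
          _ = J ε := by
                rw [show (1/K) * (K * J ε) = (K/K) * J ε by ring,
                  div_self hK0.ne', one_mul]
        · have hLle : Real.log (1 + ε ^ (-(1:ℝ)/2)) ≤
              Real.log (1 + ε₁ ^ (-(1:ℝ)/2)) := by
            apply logmono (by linarith)
            have := Real.rpow_le_rpow_of_nonpos hε₁0 hbig.le
              (by norm_num : -(1:ℝ)/2 ≤ 0)
            linarith
          calc c₀ * Real.log (1 + ε ^ (-(1:ℝ)/2)) ≤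
              (c₃ / Real.log (1 + ε₁ ^ (-(1:ℝ)/2))) * Real.log (1 + ε ^ (-(1:ℝ)/2)) :=
                mul_le_mul_of_nonneg_right (min_le_right _ _) hL.le
          _ ≤ (c₃ / Real.log (1 + ε₁ ^ (-(1:ℝ)/2))) * Real.log (1 + ε₁ ^ (-(1:ℝ)/2)) :=
                mul_le_mul_of_nonneg_left hLle (by positivity)
          _ = c₃ := div_mul_cancel₀ c₃ hL₁0.ne'
          _ ≤ J ε := hlowC ε hε
      calc min c₀ C₀ * Real.log (1 + ε ^ (-(1:ℝ)/2)) ≤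
          c₀ * Real.log (1 + ε ^ (-(1:ℝ)/2)) :=
            mul_le_mul_of_nonneg_right (min_le_left _ _) hL.le
      _ ≤ J ε := hstep
    · -- upper bound
      have hLL₀ : Real.log (1 + (T/2) ^ (-(1:ℝ)/2)) ≤ Real.log (1 + ε ^ (-(1:ℝ)/2)) := by
        apply logmono (by positivity)
        have := Real.rpow_le_rpow_of_nonpos hε.1 hε.2.le (by norm_num : -(1:ℝ)/2 ≤ 0)
        linarith
      have hmax2L : max 0 (-Real.log ε) ≤ 2 * Real.log (1 + ε ^ (-(1:ℝ)/2)) := by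
        apply max_le (by linarith)
        rcases le_or_gt 1 ε with h1 | h1
        · have := Real.log_nonneg h1
          linarith
        · have h2 : Real.log (ε ^ (-(1:ℝ)/2)) ≤ Real.log (1 + ε ^ (-(1:ℝ)/2)) :=
            logmono (by positivity) (by linarith)
          rw [Real.log_rpow hε.1] at h2
          linarith
      have hmaxsplit : max 0 (Real.log T - 1/(2*H₁) * Real.log ε) ≤
          max 0 (Real.log T) + (1/(2*H₁)) * max 0 (-Real.log ε) := by
        apply max_le
        · have h1 := le_max_left (0:ℝ) (Real.log T)
          have h2 : 0 ≤ (1/(2*H₁)) * max 0 (-Real.log ε) :=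
            mul_nonneg he₁.le (le_max_left _ _)
          linarith
        · have h1 := le_max_right (0:ℝ) (Real.log T)
          have h2 : (1/(2*H₁)) * (-Real.log ε) ≤ (1/(2*H₁)) * max 0 (-Real.log ε) :=
            mul_le_mul_of_nonneg_left (le_max_right _ _) he₁.le
          linarith
      have haL : 1 + max 0 (Real.log T) ≤ (1 + max 0 (Real.log T)) *
          (Real.log (1 + ε ^ (-(1:ℝ)/2)) / Real.log (1 + (T/2) ^ (-(1:ℝ)/2))) := by
        have hone : (1:ℝ) ≤ Real.log (1 + ε ^ (-(1:ℝ)/2)) /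
            Real.log (1 + (T/2) ^ (-(1:ℝ)/2)) := (one_le_div hL₀).mpr hLL₀
        linarith [mul_nonneg (show (0:ℝ) ≤ 1 + max 0 (Real.log T) by linarith)
          (show (0:ℝ) ≤ Real.log (1 + ε ^ (-(1:ℝ)/2)) /
            Real.log (1 + (T/2) ^ (-(1:ℝ)/2)) - 1 by linarith)]
      have hfin : J ε ≤ C₀ * Real.log (1 + ε ^ (-(1:ℝ)/2)) := by
        calc J ε ≤ (1 + 1/(2*H₂*β - 1)) *
            (1 + max 0 (Real.log T - 1/(2*H₁) * Real.log ε)) := by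
              rw [hJD ε]
              exact U2 hH₁0 hH₂0 hT hε.1 heq
        _ ≤ (1 + 1/(2*H₂*β - 1)) * ((1 + max 0 (Real.log T)) +
              (1/(2*H₁)) * (2 * Real.log (1 + ε ^ (-(1:ℝ)/2)))) := by
              apply mul_le_mul_of_nonneg_left ?_ hc₂0.le
              have h3 : (1/(2*H₁)) * max 0 (-Real.log ε) ≤
                  (1/(2*H₁)) * (2 * Real.log (1 + ε ^ (-(1:ℝ)/2))) :=
                mul_le_mul_of_nonneg_left hmax2L he₁.le
              linarith
        _ ≤ (1 + 1/(2*H₂*β - 1)) * ((1 + max 0 (Real.log T)) *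
              (Real.log (1 + ε ^ (-(1:ℝ)/2)) / Real.log (1 + (T/2) ^ (-(1:ℝ)/2))) +
              (1/(2*H₁)) * (2 * Real.log (1 + ε ^ (-(1:ℝ)/2)))) := by
              apply mul_le_mul_of_nonneg_left ?_ hc₂0.le
              linarith
        _ = C₀ * Real.log (1 + ε ^ (-(1:ℝ)/2)) := by
              rw [hC₀def]
              field_simp
      calc J ε ≤ C₀ * Real.log (1 + ε ^ (-(1:ℝ)/2)) := hfin
      _ ≤ max c₀ C₀ * Real.log (1 + ε ^ (-(1:ℝ)/2)) :=
            mul_le_mul_of_nonneg_right (le_max_right _ _) hL.le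
  · -- case (iii)
    have hgt : β < 1/(2*H₁) + 1/(2*H₂) := by
      rw [hkey, hkey2] at hcase
      linarith
    set γ₁ := (max 0 (β - 1/(2*H₂)) + min β (1/(2*H₁))) / 2 with hγ₁def
    have hmm : max 0 (β - 1/(2*H₂)) < min β (1/(2*H₁)) :=
      max_lt (lt_min hβ0 he₁) (lt_min (by linarith) (by linarith))
    have hγ₁a : max 0 (β - 1/(2*H₂)) < γ₁ := by rw [hγ₁def]; linarith
    have hγ₁b : γ₁ < min β (1/(2*H₁)) := by rw [hγ₁def]; linarith
    have hγ₁0 : 0 < γ₁ := lt_of_le_of_lt (le_max_left _ _) hγ₁a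
    have hγ₁β : γ₁ < β := lt_of_lt_of_le hγ₁b (min_le_left _ _)
    have hγ₁e : γ₁ < 1/(2*H₁) := lt_of_lt_of_le hγ₁b (min_le_right _ _)
    have hγ₂0 : 0 < β - γ₁ := by linarith
    have hγ₂e : β - γ₁ < 1/(2*H₂) := by
      have := lt_of_le_of_lt (le_max_right _ _) hγ₁a
      linarith
    have hp₁ : 2*H₁*γ₁ < 1 := by
      rw [lt_div_iff₀ (by positivity : (0:ℝ) < 2*H₁)] at hγ₁e
      linarith
    have hp₂ : 2*H₂*(β-γ₁) < 1 := by
      rw [lt_div_iff₀ (by positivity : (0:ℝ) < 2*H₂)] at hγ₂e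
      linarith
    set C₀ := T ^ (1-2*H₁*γ₁)/(1-2*H₁*γ₁) * (T ^ (1-2*H₂*(β-γ₁))/(1-2*H₂*(β-γ₁)))
      with hC₀def
    have hC₀0 : 0 < C₀ := by
      rw [hC₀def]
      have k1 : (0:ℝ) < 1-2*H₁*γ₁ := by linarith
      have k2 : (0:ℝ) < 1-2*H₂*(β-γ₁) := by linarith
      positivity
    refine ⟨min c₃ C₀, max c₃ C₀, lt_min hc₃0 hC₀0,
      le_trans (min_le_left _ _) (le_max_left _ _), ?_⟩
    intro ε hε
    refine ⟨fun h => absurd hcase (not_lt.2 h.le),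
      fun h => by rw [h] at hcase; exact absurd hcase (lt_irrefl _),
      fun _ => ⟨le_trans (min_le_left _ _) (hlowC ε hε), ?_⟩⟩
    calc J ε ≤ C₀ := by
          rw [hJD ε, hC₀def]
          exact U3 hH₁0 hH₂0 hT hε.1 hγ₁0 hγ₂0 (by ring) hp₁ hp₂
    _ ≤ max c₃ C₀ := le_max_right _ _

end
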